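/- Let Y > 0 and Λ > 0 with Λ < Y, and suppose the scalar I-divergence satisfies I(Y‖Λ) = Y·log(Y/Λ) + Λ − Y ≤ ε for some ε > 0. Then Y − Λ ≤ √(2εY). -/

import Mathlib

lemma log_quad_aux (t : ℝ) (ht : 0 < t) (ht1 : t ≤ 1) :
    1 - t + (1 - t) ^ 2 / 2 ≤ -Real.log t := by
  set f : ℝ → ℝ := fun x => -Real.log x - (1 - x) - (1 - x) ^ 2 / 2 with hf
  have key : AntitoneOn f (Set.Icc t 1) := by
    apply antitoneOn_of_deriv_nonpos (convex_Icc t 1)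
    · apply ContinuousOn.sub
      apply ContinuousOn.sub
      · exact (Real.continuousOn_log.mono (by
          intro x hx
          simp only [Set.mem_Icc] at hx
          simp only [Set.mem_compl_iff, Set.mem_singleton_iff]
          linarith [hx.1])).neg
      · fun_prop
      · fun_prop
    all_goals {
      intro x hx
      rw [interior_Icc] at hx
      have hx0 : 0 < x := lt_trans ht hx.1
      have hd : HasDerivAt f (-(x⁻¹) + 1 + (1 - x)) x := by
        have h1 : HasDerivAt (fun x : ℝ => -Real.log x) (-(x⁻¹)) x :=
          (Real.hasDerivAt_log hx0.ne').neg
        have h2 : HasDerivAt (fun x : ℝ => (1 - x)) (-1 : ℝ) x := by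
          simpa using (hasDerivAt_id x).const_sub 1
        have h3 : HasDerivAt (fun x : ℝ => (1 - x) ^ 2 / 2) ((1 - x) * (-1)) x := by
          have := (h2.pow 2).div_const 2
          exact this.congr_deriv (by norm_num; ring)
        have := (h1.sub h2).sub h3
        exact this.congr_deriv (by ring)
      first
      | exact hd.differentiableAt.differentiableWithinAt
      | · rw [hd.deriv]
          have : -(x⁻¹) + 1 + (1 - x) = -((x - 1) ^ 2 / x) := by
            field_simp
            ring
          rw [this]
          have : 0 ≤ (x - 1) ^ 2 / x := div_nonneg (sq_nonneg _) hx0.le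
          linarith }
  have h1 : f 1 ≤ f t := key (Set.mem_Icc.2 ⟨le_refl t, ht1⟩)
    (Set.mem_Icc.2 ⟨ht1, le_refl 1⟩) ht1
  simp only [hf, Real.log_one] at h1
  norm_num at h1
  linarith

theorem scalar_Idiv_lower_tail (Y Λ ε : ℝ) (hY : 0 < Y) (hΛ : 0 < Λ) (hΛY : Λ < Y)
    (hε : 0 < ε) (h : Y * Real.log (Y / Λ) + Λ - Y ≤ ε) :
    Y - Λ ≤ Real.sqrt (2 * ε * Y) := by
  set t := Λ / Y with ht
  have ht0 : 0 < t := div_pos hΛ hY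
  have ht1 : t ≤ 1 := le_of_lt ((div_lt_one hY).2 hΛY)
  have haux := log_quad_aux t ht0 ht1
  have hlog : Real.log (Y / Λ) = -Real.log t := by
    rw [ht, ← Real.log_inv]
    congr 1
    field_simp
  have hkey : (Y - Λ) ^ 2 / (2 * Y) ≤ ε := by
    have hmul := mul_le_mul_of_nonneg_left haux hY.le
    rw [← hlog] at hmul
    have htf : t = Λ / Y := ht
    have expand : Y * (1 - t + (1 - t) ^ 2 / 2) = (Y - Λ) + (Y - Λ) ^ 2 / (2 * Y) := by
      rw [htf]
      field_simp
    rw [expand] at hmul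
    linarith
  have hsq : (Y - Λ) ^ 2 ≤ 2 * ε * Y := by
    rw [div_le_iff₀ (by positivity)] at hkey
    nlinarith
  calc Y - Λ = Real.sqrt ((Y - Λ) ^ 2) := by
        rw [Real.sqrt_sq (by linarith)]
    _ ≤ Real.sqrt (2 * ε * Y) := Real.sqrt_le_sqrt hsq
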